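/- Let p be a prime. For every cyclic subgroup C of order p of Sym(ℤ/pℤ) and every function φ : ℤ/pℤ → ℤ/pℤ∖{0}, the set S_{(C,φ)} = {(f, f′) ∈ H : f ∈ C and f′(x) = φ(f(x))/φ(x) for all x ∈ ℤ/pℤ} is a Sylow p-subgroup of H; every Sylow p-subgroup of H equals S_{(C,φ)} for some such pair; and S_{(C,φ)} = S_{(D,ψ)} if and only if C = D and φ = k·ψ for some nonzero constant k ∈ ℤ/pℤ. Consequently the Sylow p-subgroups of H are in bijective correspondence with pairs (C, φ̄), where C is a cyclic subgroup of Sym(ℤ/pℤ) of order p and φ̄ is the class of φ : ℤ/pℤ → ℤ/pℤ∖{0} under multiplication by nonzero constants. -/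

import Mathlib

/-- The group `H`: pairs `(f, f')` with `f` a permutation of `ℤ/pℤ` and
`f' : ℤ/pℤ → ℤ/pℤ∖{0}` an arbitrary function (encoded as taking values in the
units `(ℤ/pℤ)ˣ`), with multiplication `(f,f')∘(g,g') = (f∘g, (f'∘g)·g')`. -/
@[ext]
structure Hgrp (p : ℕ) where
  perm : Equiv.Perm (ZMod p)
  der : ZMod p → (ZMod p)ˣ

namespace Hgrp

instance (p : ℕ) : Group (Hgrp p) where
  mul a b := ⟨a.perm * b.perm, fun x => a.der (b.perm x) * b.der x⟩
  one := ⟨1, 1⟩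
  inv a := ⟨a.perm⁻¹, fun x => (a.der (a.perm⁻¹ x))⁻¹⟩
  mul_assoc a b c := by
    refine Hgrp.ext (mul_assoc _ _ _) ?_
    funext x
    exact mul_assoc _ _ _
  one_mul a := by
    refine Hgrp.ext (one_mul _) ?_
    funext x
    exact one_mul _
  mul_one a := by
    refine Hgrp.ext (mul_one _) ?_
    funext x
    exact mul_one _
  inv_mul_cancel a := by
    refine Hgrp.ext (inv_mul_cancel _) ?_
    funext x
    show (a.der (a.perm⁻¹ (a.perm x)))⁻¹ * a.der x = 1
    rw [Equiv.Perm.inv_eq_iff_eq.mpr rfl, inv_mul_cancel]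

theorem mul_def {p : ℕ} (a b : Hgrp p) :
    a * b = ⟨a.perm * b.perm, fun x => a.der (b.perm x) * b.der x⟩ := rfl

theorem one_def {p : ℕ} : (1 : Hgrp p) = ⟨1, 1⟩ := rfl

end Hgrp

/-- The subset `S_{(C,φ)} = {(f, f') ∈ H : f ∈ C, f'(x) = φ(f(x))/φ(x)}` of `H`. -/
def sylowCandidate (p : ℕ) (C : Subgroup (Equiv.Perm (ZMod p)))
    (φ : ZMod p → (ZMod p)ˣ) : Set (Hgrp p) :=
  {h : Hgrp p | h.perm ∈ C ∧ ∀ x : ZMod p, h.der x = φ (h.perm x) / φ x}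

-- AUX

namespace HgrpAux

variable (p : ℕ) [Fact p.Prime]

def hEquiv : Hgrp p ≃ Equiv.Perm (ZMod p) × (ZMod p → (ZMod p)ˣ) where
  toFun h := (h.perm, h.der)
  invFun x := ⟨x.1, x.2⟩
  left_inv _ := rfl
  right_inv _ := rfl

instance : Finite (Hgrp p) := Finite.of_equiv _ (hEquiv p).symm

/-- the projection hom -/
def permHom : Hgrp p →* Equiv.Perm (ZMod p) where
  toFun := Hgrp.perm
  map_one' := rfl
  map_mul' _ _ := rfl

lemma card_H : Nat.card (Hgrp p) = p.factorial * (p - 1) ^ p := by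
  have hu : Nat.card (ZMod p)ˣ = p - 1 := by
    have := ZMod.card_units_eq_totient p
    simp [Nat.card_eq_fintype_card, this, Nat.totient_prime Fact.out]
  rw [Nat.card_congr (hEquiv p), Nat.card_prod, Nat.card_fun, hu, Nat.card_zmod]
  congr 1
  simp [Nat.card_eq_fintype_card, Fintype.card_perm, ZMod.card]

lemma fact_H : (Nat.card (Hgrp p)).factorization p = 1 := by
  have hp : p.Prime := Fact.out
  have hple : 2 ≤ p := hp.two_le
  have h1 : p.factorial ≠ 0 := Nat.factorial_ne_zero p
  have h2 : (p - 1) ^ p ≠ 0 := pow_ne_zero _ (by omega)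
  have hnd2 : ¬ p ∣ (p - 1) := fun h => by
    have := Nat.le_of_dvd (by omega) h
    omega
  rw [card_H, Nat.factorization_mul h1 h2]
  have hpf : (p.factorial).factorization p = 1 := by
    have : p.factorial = p * (p - 1).factorial := by
      conv_lhs => rw [show p = (p - 1) + 1 by omega]
      rw [Nat.factorial_succ]
      congr 1; omega
    rw [this, Nat.factorization_mul hp.ne_zero (Nat.factorial_ne_zero _)]
    have hnd : ¬ p ∣ (p - 1).factorial := by
      rw [hp.dvd_factorial]; omega
    simp [hp.factorization, Nat.factorization_eq_zero_of_not_dvd hnd]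
  simp [hpf, Nat.factorization_eq_zero_of_not_dvd hnd2]

/-- order p permutation of ZMod p has no fixed points -/
lemma no_fixed {f : Equiv.Perm (ZMod p)} (hf : orderOf f = p) (x : ZMod p) : f x ≠ x := by
  have hcard : Fintype.card (ZMod p) = p := ZMod.card p
  have hc : f.IsCycle :=
    Equiv.Perm.isCycle_of_prime_order'' (by rw [hcard]; exact Fact.out) (by rw [hf, hcard])
  have hsupp : f.support = Finset.univ := by
    apply Finset.eq_univ_of_card
    rw [← hc.orderOf, hf, hcard]
  have : x ∈ f.support := hsupp ▸ Finset.mem_univ x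
  exact Equiv.Perm.mem_support.mp this

lemma perm_trans {f : Equiv.Perm (ZMod p)} (hf : orderOf f = p) (x y : ZMod p) :
    ∃ i : ℤ, (f ^ i) x = y := by
  have hcard : Fintype.card (ZMod p) = p := ZMod.card p
  have hc : f.IsCycle :=
    Equiv.Perm.isCycle_of_prime_order'' (by rw [hcard]; exact Fact.out) (by rw [hf, hcard])
  obtain ⟨a, -, ha⟩ := hc
  exact (ha (no_fixed p hf x)).symm.trans (ha (no_fixed p hf y))

lemma fixed_zpow {f : Equiv.Perm (ZMod p)} (hf : orderOf f = p) {m : ℤ} {x : ZMod p}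
    (h : (f ^ m) x = x) : f ^ m = 1 := by
  by_contra hne
  have hdvd : orderOf (f ^ m) ∣ p := by
    apply orderOf_dvd_of_pow_eq_one
    have hfp : f ^ (p : ℤ) = 1 := by
      have h1 := pow_orderOf_eq_one f
      rw [hf] at h1
      rw [zpow_natCast, h1]
    rw [← zpow_natCast (f ^ m) p, ← zpow_mul, mul_comm, zpow_mul, hfp, one_zpow]
  have : orderOf (f ^ m) = p := ((Fact.out : p.Prime).eq_one_or_self_of_dvd _ hdvd).resolve_left
    (by simpa [orderOf_eq_one_iff] using hne)
  exact no_fixed p this x h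

/-- The candidate as a subgroup. -/
def sylS (C : Subgroup (Equiv.Perm (ZMod p))) (φ : ZMod p → (ZMod p)ˣ) : Subgroup (Hgrp p) where
  carrier := sylowCandidate p C φ
  one_mem' := ⟨one_mem C, fun x => by simp [Hgrp.one_def]⟩
  mul_mem' := by
    rintro a b ⟨haC, ha⟩ ⟨hbC, hb⟩
    refine ⟨mul_mem haC hbC, fun x => ?_⟩
    show a.der (b.perm x) * b.der x = φ ((a.perm * b.perm) x) / φ x
    rw [ha, hb, Equiv.Perm.mul_apply]
    exact div_mul_div_cancel _ _ _
  inv_mem' := by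
    rintro a ⟨haC, ha⟩
    refine ⟨inv_mem haC, fun x => ?_⟩
    show (a.der (a.perm⁻¹ x))⁻¹ = φ (a.perm⁻¹ x) / φ x
    rw [ha, ← Equiv.Perm.mul_apply, mul_inv_cancel, Equiv.Perm.one_apply]
    exact inv_div _ _

lemma card_sylS (C : Subgroup (Equiv.Perm (ZMod p))) (φ : ZMod p → (ZMod p)ˣ) :
    Nat.card (sylS p C φ) = Nat.card C := by
  apply Nat.card_congr
  refine ⟨fun s => ⟨s.1.perm, s.2.1⟩,
    fun f => ⟨⟨f.1, fun x => φ (f.1 x) / φ x⟩, f.2, fun _ => rfl⟩, ?_, ?_⟩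
  · rintro ⟨a, ha⟩
    apply Subtype.ext
    refine Hgrp.ext rfl ?_
    funext x
    exact (ha.2 x).symm
  · rintro ⟨f, hf⟩; rfl

lemma mem_sylS_iff {C : Subgroup (Equiv.Perm (ZMod p))} {φ : ZMod p → (ZMod p)ˣ}
    {a : Hgrp p} : a ∈ sylS p C φ ↔ a.perm ∈ C ∧ ∀ x, a.der x = φ (a.perm x) / φ x :=
  Iff.rfl

end HgrpAux

namespace HgrpAux

variable (p : ℕ) [Fact p.Prime]

lemma exists_gen {G : Type*} [Group G] [Finite G] (K : Subgroup G) (hK : Nat.card K = p) :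
    ∃ g ∈ K, orderOf g = p ∧ Subgroup.zpowers g = K := by
  have hp : p.Prime := Fact.out
  have hnt : Nontrivial K := Finite.one_lt_card_iff_nontrivial.mp (by rw [hK]; exact hp.one_lt)
  obtain ⟨k, hk⟩ := exists_ne (1 : K)
  have hdvd : orderOf k ∣ p := hK ▸ orderOf_dvd_natCard k
  have hord : orderOf k = p := (hp.eq_one_or_self_of_dvd _ hdvd).resolve_left
    (by simpa [orderOf_eq_one_iff] using hk)
  have hordc : orderOf (k : G) = p := (Subgroup.orderOf_coe k).trans hord
  refine ⟨k, k.2, hordc, ?_⟩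
  apply Subgroup.eq_of_le_of_card_ge (Subgroup.zpowers_le.mpr k.2)
  rw [hK, Nat.card_zpowers, hordc]

lemma card_units : Nat.card (ZMod p)ˣ = p - 1 := by
  have := ZMod.card_units_eq_totient p
  simp [Nat.card_eq_fintype_card, this, Nat.totient_prime Fact.out]

lemma perm_one_pow {a : Hgrp p} (ha : a.perm = 1) (n : ℕ) :
    a ^ n = ⟨1, fun x => (a.der x) ^ n⟩ := by
  induction n with
  | zero => rw [pow_zero]; exact Hgrp.ext rfl (by funext x; simp [Hgrp.one_def])
  | succ n ih =>
    rw [pow_succ, ih, Hgrp.mul_def]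
    refine Hgrp.ext (by simp [ha]) ?_
    funext x
    show (a.der (a.perm x)) ^ n * a.der x = a.der x ^ (n + 1)
    rw [ha]
    show (a.der x) ^ n * a.der x = a.der x ^ (n + 1)
    rw [pow_succ]

lemma orderOf_perm {h : Hgrp p} (hh : orderOf h = p) : orderOf h.perm = p := by
  have hp : p.Prime := Fact.out
  have hdvd : orderOf (permHom p h) ∣ p := by
    have := orderOf_map_dvd (permHom p) h
    rwa [hh] at this
  refine (hp.eq_one_or_self_of_dvd _ hdvd).resolve_left fun h1 => ?_
  have hperm1 : h.perm = 1 := orderOf_eq_one_iff.mp h1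
  have hpow : h ^ p = 1 := by
    have := pow_orderOf_eq_one h
    rwa [hh] at this
  have hder1 : ∀ x, h.der x = 1 := by
    intro x
    have h2 : (h.der x) ^ p = 1 := by
      have := congrArg (fun a => Hgrp.der a x) hpow
      rwa [perm_one_pow p hperm1 p] at this
    have hd1 : orderOf (h.der x) ∣ p := orderOf_dvd_of_pow_eq_one h2
    have hd2 : orderOf (h.der x) ∣ p - 1 := card_units p ▸ orderOf_dvd_natCard _
    have hcop : Nat.Coprime p (p - 1) := by
      have h2le : 2 ≤ p := hp.two_le
      have heq : p = (p - 1) + 1 := by omega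
      rw [heq]
      simp [Nat.coprime_self_add_left]
    have : orderOf (h.der x) = 1 := Nat.eq_one_of_dvd_coprimes hcop hd1 hd2
    exact orderOf_eq_one_iff.mp this
  have : h = 1 := Hgrp.ext hperm1 (funext hder1)
  rw [this, orderOf_one] at hh
  exact hp.one_lt.ne' hh.symm

end HgrpAux


/-- For every cyclic subgroup `C` of order `p` of `Sym(ℤ/pℤ)` and every
`φ : ℤ/pℤ → ℤ/pℤ∖{0}`, the set `S_{(C,φ)}` is a Sylow `p`-subgroup of `H`;
every Sylow `p`-subgroup of `H` is of this form; and
`S_{(C,φ)} = S_{(D,ψ)}` if and only if `C = D` and `φ = k·ψ` for a nonzero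
constant `k`.  Hence the Sylow `p`-subgroups of `H` correspond bijectively to
pairs `(C, φ̄)` with `φ̄` the class of `φ` modulo nonzero constants. -/
theorem sylow_subgroups_of_H_description (p : ℕ) [Fact p.Prime] :
    (∀ (C : Subgroup (Equiv.Perm (ZMod p))) (φ : ZMod p → (ZMod p)ˣ),
      Nat.card C = p →
        ∃ P : Sylow p (Hgrp p),
          ((P : Subgroup (Hgrp p)) : Set (Hgrp p)) = sylowCandidate p C φ) ∧
    (∀ P : Sylow p (Hgrp p),
      ∃ (C : Subgroup (Equiv.Perm (ZMod p))) (φ : ZMod p → (ZMod p)ˣ),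
        Nat.card C = p ∧
        ((P : Subgroup (Hgrp p)) : Set (Hgrp p)) = sylowCandidate p C φ) ∧
    (∀ (C D : Subgroup (Equiv.Perm (ZMod p))) (φ ψ : ZMod p → (ZMod p)ˣ),
      Nat.card C = p → Nat.card D = p →
        (sylowCandidate p C φ = sylowCandidate p D ψ ↔
          C = D ∧ ∃ k : (ZMod p)ˣ, ∀ x : ZMod p, φ x = k * ψ x)) := by
  classical
  have hp : p.Prime := Fact.out
  refine ⟨?_, ?_, ?_⟩
  · -- Part 1
    intro C φ hC
    refine ⟨Sylow.ofCard (HgrpAux.sylS p C φ) ?_, ?_⟩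
    · rw [HgrpAux.card_sylS, hC, HgrpAux.fact_H, pow_one]
    · rw [Sylow.coe_ofCard]
      rfl
  · -- Part 2
    intro P
    have hcardP : Nat.card (P : Subgroup (Hgrp p)) = p := by
      have := Sylow.card_eq_multiplicity P
      rwa [HgrpAux.fact_H, pow_one] at this
    obtain ⟨g, hgP, hgord, hgz⟩ := HgrpAux.exists_gen p (P : Subgroup (Hgrp p)) hcardP
    set f := g.perm with hfdef
    have hford : orderOf f = p := HgrpAux.orderOf_perm p hgord
    have hCcard : Nat.card (Subgroup.zpowers f) = p := by
      rw [Nat.card_zpowers, hford]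
    have hex : ∀ x : ZMod p, ∃ i : ℤ, (f ^ i) 0 = x := fun x => HgrpAux.perm_trans p hford 0 x
    choose k hk using hex
    set φ : ZMod p → (ZMod p)ˣ := fun x => (g ^ k x).der 0 with hφ
    have keyA : ∀ m n : ℤ, (f ^ m) 0 = (f ^ n) 0 → g ^ m = g ^ n := by
      intro m n hmn
      have h1 : (f ^ (m - n)) ((f ^ n) 0) = (f ^ n) 0 := by
        rw [← Equiv.Perm.mul_apply, ← zpow_add, sub_add_cancel, hmn]
      have h2 : f ^ (m - n) = 1 := HgrpAux.fixed_zpow p hford h1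
      have h3 : (p : ℤ) ∣ m - n := by
        have := orderOf_dvd_iff_zpow_eq_one.mpr h2
        rwa [hford] at this
      have h4 : g ^ (m - n) = 1 := by
        apply orderOf_dvd_iff_zpow_eq_one.mp
        rwa [hgord]
      calc g ^ m = g ^ (m - n) * g ^ n := by rw [← zpow_add, sub_add_cancel]
      _ = g ^ n := by rw [h4, one_mul]
    have hpermpow : ∀ i : ℤ, (g ^ i).perm = f ^ i := fun i => map_zpow (HgrpAux.permHom p) g i
    have hder : ∀ x, g.der x = φ (f x) / φ x := by
      intro x
      have h1 : (f ^ (k x + 1)) 0 = f x := by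
        rw [add_comm, zpow_add, zpow_one, Equiv.Perm.mul_apply, hk]
      have h2 : g ^ (k (f x)) = g * g ^ (k x) := by
        have h3 := keyA (k (f x)) (k x + 1) (by rw [hk, h1])
        rw [h3, add_comm, zpow_add, zpow_one]
      have h4 : φ (f x) = g.der x * φ x := by
        show (g ^ k (f x)).der 0 = g.der x * (g ^ k x).der 0
        rw [h2, Hgrp.mul_def]
        show g.der ((g ^ k x).perm 0) * (g ^ k x).der 0 = _
        rw [hpermpow, hk]
      rw [h4, mul_div_cancel_right]
    have hgmem : g ∈ HgrpAux.sylS p (Subgroup.zpowers f) φ := ⟨Subgroup.mem_zpowers f, hder⟩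
    have hPeq : (P : Subgroup (Hgrp p)) = HgrpAux.sylS p (Subgroup.zpowers f) φ := by
      rw [← hgz]
      apply Subgroup.eq_of_le_of_card_ge (Subgroup.zpowers_le.mpr hgmem)
      rw [HgrpAux.card_sylS, hCcard, Nat.card_zpowers, hgord]
    exact ⟨Subgroup.zpowers f, φ, hCcard, by rw [hPeq]; rfl⟩
  · -- Part 3
    intro C D φ ψ hC hD
    constructor
    · intro hset
      have hmemC : ∀ f ∈ C, (⟨f, fun x => φ (f x) / φ x⟩ : Hgrp p) ∈ sylowCandidate p C φ :=
        fun f hf => ⟨hf, fun _ => rfl⟩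
      have hmemD : ∀ f ∈ D, (⟨f, fun x => ψ (f x) / ψ x⟩ : Hgrp p) ∈ sylowCandidate p D ψ :=
        fun f hf => ⟨hf, fun _ => rfl⟩
      have hCD : C = D := by
        ext f
        constructor
        · intro hf
          have := hmemC f hf
          rw [hset] at this
          exact this.1
        · intro hf
          have := hmemD f hf
          rw [← hset] at this
          exact this.1
      refine ⟨hCD, φ 0 / ψ 0, fun x => ?_⟩
      obtain ⟨f, hfC, hford, -⟩ := HgrpAux.exists_gen p C hC
      have hmem := hmemC f hfC
      rw [hset] at hmem
      have heq : ∀ x, φ (f x) / φ x = ψ (f x) / ψ x := fun x => hmem.2 x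
      have hinv : ∀ x, φ (f x) / ψ (f x) = φ x / ψ x := by
        intro x
        have h1 := div_eq_div_iff_mul_eq_mul.mp (heq x)
        rw [div_eq_div_iff_mul_eq_mul]
        exact h1.trans (mul_comm _ _)
      have hnat : ∀ (n : ℕ) (x : ZMod p), φ ((f ^ n) x) / ψ ((f ^ n) x) = φ x / ψ x := by
        intro n
        induction n with
        | zero => intro x; simp
        | succ n ih =>
          intro x
          rw [pow_succ, Equiv.Perm.mul_apply, ih (f x), hinv]
      obtain ⟨i, hi⟩ := HgrpAux.perm_trans p hford 0 x
      have hnn : 0 ≤ i % (p : ℤ) := Int.emod_nonneg i (by exact_mod_cast hp.ne_zero)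
      have hmod : f ^ (((i % (p : ℤ)).toNat : ℕ) : ℤ) = f ^ i := by
        rw [Int.toNat_of_nonneg hnn]
        have := zpow_mod_orderOf f i
        rwa [hford] at this
      have hn : (f ^ (i % (p : ℤ)).toNat) 0 = x := by
        rw [← zpow_natCast, hmod, hi]
      have hx := hnat (i % (p : ℤ)).toNat 0
      rw [hn] at hx
      rw [← hx, div_mul_cancel]
    · rintro ⟨rfl, k, hk⟩
      ext a
      simp only [sylowCandidate, Set.mem_setOf_eq]
      constructor
      · rintro ⟨h1, h2⟩
        refine ⟨h1, fun x => ?_⟩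
        have := h2 x
        rw [hk, hk, mul_div_mul_left_eq_div] at this
        exact this
      · rintro ⟨h1, h2⟩
        refine ⟨h1, fun x => ?_⟩
        rw [hk (a.perm x), hk x, mul_div_mul_left_eq_div]
        exact h2 x
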